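/- Let m, n, k, λ be positive integers with 2n ∣ m. Suppose there exist (i) a BGW(m,m,m) over the cyclic group ℤ/2nℤ, encoded as a function c : {1,…,m}×{1,…,m} → ℤ/2nℤ such that for all distinct i, j and every g ∈ ℤ/2nℤ, the number of indices ℓ with c(i,ℓ) − c(j,ℓ) = g equals m/(2n); and (ii) a BGW(n,k,λ) over {1,−1}. Then there exists an (mn)×(mn) integer matrix W, with rows and columns indexed by {1,…,m}×{1,…,n}, whose entries lie in {−1,0,1}, such that W·Wᵀ = mk·I, |W|·|W|ᵀ = |W|ᵀ·|W| = mk·I + mλ·(𝒥_{m,n} − I) + (m/n)k²·(J − 𝒥_{m,n}) (so |W| is the incidence matrix of an SGDD(mn, mk, m, n, mλ, (m/n)k²)), and |W|·𝒥_{m,n} = 𝒥_{m,n}·|W| = k·J. -/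

import Mathlib

set_option linter.unusedSectionVars false
set_option linter.unusedVariables false
set_option maxHeartbeats 1600000

open Matrix Finset

/-- The all-ones matrix. -/
def allOnes (ι : Type*) : Matrix ι ι ℤ := Matrix.of fun _ _ => 1

/-- The matrix `𝒥_{m,n} = I_m ⊗ J_n`, with rows and columns indexed by pairs:
entry `((i,a),(j,b))` is `1` iff `i = j`. -/
def blockJ (m n : ℕ) : Matrix (Fin m × Fin n) (Fin m × Fin n) ℤ :=
  Matrix.of fun x y => if x.1 = y.1 then 1 else 0

section Shift
variable {n : ℕ} [NeZero n]

instance : NeZero (2*n) := ⟨Nat.mul_ne_zero two_ne_zero (NeZero.ne n)⟩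

variable (n) in
def fz (z : ZMod (2*n)) : Fin n := ⟨z.val % n, Nat.mod_lt _ (Nat.pos_of_ne_zero (NeZero.ne n))⟩

lemma npos : 0 < n := Nat.pos_of_ne_zero (NeZero.ne n)

lemma nval : ((n : ℕ) : ZMod (2*n)).val = n := ZMod.val_cast_of_lt (by have := npos (n := n); omega)

lemma nne : ((n : ℕ) : ZMod (2*n)) ≠ 0 := by
  intro h
  have := nval (n := n)
  rw [h] at this
  simp [ZMod.val_zero] at this
  exact (NeZero.ne n) this.symm

lemma h2n : ((n:ℕ) : ZMod (2*n)) + (n:ℕ) = 0 := by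
  rw [← Nat.cast_add, show n + n = 2*n by ring]
  exact ZMod.natCast_self _

lemma val_decomp (z : ZMod (2*n)) : z.val = z.val % n ∨ z.val = z.val % n + n := by
  have hz : z.val < 2*n := ZMod.val_lt z
  rcases lt_or_ge z.val n with h | h
  · left; rw [Nat.mod_eq_of_lt h]
  · right
    rw [Nat.mod_eq_sub_mod h, Nat.mod_eq_of_lt (by omega)]
    omega

lemma fz_add_n (z : ZMod (2*n)) : fz n (z + (n:ℕ)) = fz n z := by
  have hz : z.val < 2*n := ZMod.val_lt z
  have hv : (z + (n:ℕ)).val = (z.val + n) % (2*n) := by rw [ZMod.val_add, nval]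
  apply Fin.ext
  show (z + (n:ℕ)).val % n = z.val % n
  rw [hv]
  rcases lt_or_ge (z.val + n) (2*n) with h | h
  · rw [Nat.mod_eq_of_lt h, Nat.add_mod_right]
  · have h2 : (z.val + n) % (2*n) = z.val - n := by
      rw [Nat.mod_eq_sub_mod h]
      rw [show z.val + n - 2*n = z.val - n by omega]
      exact Nat.mod_eq_of_lt (by omega)
    rw [h2]
    conv_rhs => rw [show z.val = (z.val - n) + n by omega, Nat.add_mod_right]

lemma val_eq_val {z z' : ZMod (2*n)} (h : z.val = z'.val) : z = z' :=
  ZMod.val_injective _ h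

lemma fz_eq_iff (z z' : ZMod (2*n)) : fz n z = fz n z' ↔ z = z' ∨ z = z' + (n:ℕ) := by
  constructor
  · intro h
    have hm : z.val % n = z'.val % n := congrArg Fin.val h
    have h1 : z.val < 2*n := ZMod.val_lt z
    have h2 : z'.val < 2*n := ZMod.val_lt z'
    have d1 := val_decomp z
    have d2 := val_decomp z'
    have : z.val = z'.val ∨ z.val = z'.val + n ∨ z'.val = z.val + n := by omega
    rcases this with h | h | h
    · exact Or.inl (val_eq_val h)
    · refine Or.inr (val_eq_val ?_)
      rw [ZMod.val_add, nval, Nat.mod_eq_of_lt (by omega)]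
      exact h
    · right
      have hz' : z' = z + (n:ℕ) := val_eq_val (by rw [ZMod.val_add, nval, Nat.mod_eq_of_lt (by omega)]; exact h)
      rw [hz', add_assoc, h2n, add_zero]
  · rintro (rfl | rfl)
    · rfl
    · exact fz_add_n z'

lemma fz_natCast (a : Fin n) : fz n (((a:ℕ) : ZMod (2*n))) = a := by
  apply Fin.ext
  show (((a:ℕ) : ZMod (2*n))).val % n = a
  rw [ZMod.val_cast_of_lt (by omega)]
  exact Nat.mod_eq_of_lt a.isLt

lemma castfz (z : ZMod (2*n)) :
    (((fz n z : ℕ)) : ZMod (2*n)) = z ∨ (((fz n z : ℕ)) : ZMod (2*n)) = z - (n:ℕ) := by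
  have : ((fz n z : ℕ) : ZMod (2*n)) = ((z.val % n : ℕ) : ZMod (2*n)) := rfl
  rcases val_decomp z with h | h
  · left; rw [this, ← h, ZMod.natCast_val, ZMod.cast_id]
  · right
    rw [this, show z.val % n = z.val - n by omega]
    have : ((z.val - n : ℕ) : ZMod (2*n)) = ((z.val : ℕ) : ZMod (2*n)) - ((n:ℕ) : ZMod (2*n)) := by
      rw [← Nat.cast_sub (by omega)]
    rw [this, ZMod.natCast_val, ZMod.cast_id]

variable (n) in
def sg (z : ZMod (2*n)) : ℤ := if z.val < n then 1 else -1

lemma sg_mul_self (z : ZMod (2*n)) : sg n z * sg n z = 1 := by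
  unfold sg; split <;> ring

lemma sg_abs (z : ZMod (2*n)) : |sg n z| = 1 := by
  unfold sg; split <;> simp

lemma sg_add_n (z : ZMod (2*n)) : sg n (z + (n:ℕ)) = - sg n z := by
  have hz : z.val < 2*n := ZMod.val_lt z
  have hn0 : 0 < n := npos
  have hv : (z + (n:ℕ)).val = (z.val + n) % (2*n) := by rw [ZMod.val_add, nval]
  unfold sg
  rw [hv]
  rcases lt_or_ge z.val n with h | h
  · rw [Nat.mod_eq_of_lt (by omega), if_neg (by omega), if_pos h]
  · rw [Nat.mod_eq_sub_mod (by omega),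
      show z.val + n - 2*n = z.val - n by omega, Nat.mod_eq_of_lt (by omega), if_pos (by omega),
      if_neg (by omega)]
    ring

lemma key (z z' : ZMod (2*n)) :
    (if fz n z = fz n z' then sg n z * sg n z' else 0) =
      (if z = z' then 1 else 0) - (if z = z' + (n:ℕ) then 1 else 0) := by
  by_cases h1 : z = z'
  · subst h1
    rw [if_pos rfl, sg_mul_self, if_pos rfl, if_neg, sub_zero]
    intro h
    exact nne (n := n) (by linear_combination -h)
  · by_cases h2 : z = z' + (n:ℕ)
    · subst h2
      rw [if_pos (fz_add_n z'), if_neg h1, if_pos rfl, sg_add_n, neg_mul, sg_mul_self]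
      ring
    · rw [if_neg, if_neg h1, if_neg h2, sub_zero]
      rw [fz_eq_iff]
      tauto

lemma split01 (z z' : ZMod (2*n)) :
    (if fz n z = fz n z' then (1:ℤ) else 0) =
      (if z = z' then 1 else 0) + (if z = z' + (n:ℕ) then 1 else 0) := by
  by_cases h1 : z = z'
  · subst h1
    rw [if_pos rfl, if_pos rfl, if_neg, add_zero]
    intro h
    exact nne (n := n) (by linear_combination -h)
  · by_cases h2 : z = z' + (n:ℕ)
    · subst h2
      rw [if_pos (fz_add_n z'), if_neg h1, if_pos rfl, zero_add]
    · rw [if_neg, if_neg h1, if_neg h2, add_zero]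
      rw [fz_eq_iff]
      tauto

variable (n) in
def sh (g : ZMod (2*n)) (a : Fin n) : Fin n := fz n (((a:ℕ) : ZMod (2*n)) - g)

lemma sh_zero (a : Fin n) : sh n 0 a = a := by
  unfold sh
  rw [sub_zero, fz_natCast]

lemma sh_comp (g₁ g₂ : ZMod (2*n)) (a : Fin n) :
    sh n g₂ a = sh n (g₂ - g₁) (sh n g₁ a) := by
  unfold sh
  rcases castfz (n := n) (((a:ℕ) : ZMod (2*n)) - g₁) with h | h
  · rw [h]; ring_nf
  · rw [h]
    have : ((a:ℕ) : ZMod (2*n)) - g₁ - (n:ℕ) - (g₂ - g₁) = (((a:ℕ) : ZMod (2*n)) - g₂) - (n:ℕ) := by ring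
    rw [this]
    have := fz_add_n (n := n) ((((a:ℕ) : ZMod (2*n)) - g₂) - (n:ℕ))
    rw [sub_add_cancel] at this
    rw [this]

lemma cast_fin_inj {a b : Fin n} (h : ((a:ℕ) : ZMod (2*n)) = ((b:ℕ) : ZMod (2*n))) : a = b := by
  apply Fin.ext
  have ha : (((a:ℕ) : ZMod (2*n))).val = a := ZMod.val_cast_of_lt (by omega)
  have hb : (((b:ℕ) : ZMod (2*n))).val = b := ZMod.val_cast_of_lt (by omega)
  rw [← ha, ← hb, h]

lemma not_cast_eq_add_n (a b : Fin n) : ((a:ℕ) : ZMod (2*n)) ≠ ((b:ℕ) : ZMod (2*n)) + (n:ℕ) := by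
  intro h
  have ha : (((a:ℕ) : ZMod (2*n))).val = a := ZMod.val_cast_of_lt (by omega)
  have hb : (((b:ℕ) : ZMod (2*n)) + (n:ℕ)).val = b + n := by
    rw [ZMod.val_add, nval, ZMod.val_cast_of_lt (by omega), Nat.mod_eq_of_lt (by omega)]
  rw [h, hb] at ha
  omega

lemma sh_bijective (g : ZMod (2*n)) : Function.Bijective (sh n g) := by
  rw [Fintype.bijective_iff_injective_and_card]
  refine ⟨fun a b h => ?_, rfl⟩
  unfold sh at h
  rw [fz_eq_iff] at h
  rcases h with h | h
  · exact cast_fin_inj (by linear_combination h)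
  · exact absurd (by linear_combination h) (not_cast_eq_add_n a b)

lemma two_to_one (F : Fin n → ℤ) : ∑ d : ZMod (2*n), F (fz n d) = 2 * ∑ x : Fin n, F x := by
  rw [← Finset.sum_fiberwise Finset.univ (fz n) (fun d => F (fz n d))]
  rw [Finset.mul_sum]
  apply Finset.sum_congr rfl
  intro x _
  have hfilter : Finset.univ.filter (fun d : ZMod (2*n) => fz n d = x) =
      {((x:ℕ) : ZMod (2*n)), ((x:ℕ) : ZMod (2*n)) + (n:ℕ)} := by
    ext d
    simp only [Finset.mem_filter, Finset.mem_univ, true_and, Finset.mem_insert, Finset.mem_singleton]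
    have hx := fz_eq_iff (n := n) d (((x:ℕ)) : ZMod (2*n))
    rw [fz_natCast] at hx
    exact hx
  rw [hfilter]
  rw [Finset.sum_insert (by
    simp only [Finset.mem_singleton]
    intro h
    exact nne (n := n) (by linear_combination -h)), Finset.sum_singleton]
  have e1 : fz n (((x:ℕ) : ZMod (2*n))) = x := fz_natCast x
  have e2 : fz n (((x:ℕ) : ZMod (2*n)) + (n:ℕ)) = x := by rw [fz_add_n, fz_natCast]
  rw [e1, e2]
  ring

lemma key' (g₁ g₂ : ZMod (2*n)) (a b : Fin n) :
    sg n (((a:ℕ) : ZMod (2*n)) - g₁) * sg n (((b:ℕ) : ZMod (2*n)) - g₂) *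
      (if sh n g₁ a = sh n g₂ b then (1:ℤ) else 0) =
    (if ((a:ℕ) : ZMod (2*n)) - g₁ = ((b:ℕ) : ZMod (2*n)) - g₂ then 1 else 0)
      - (if ((a:ℕ) : ZMod (2*n)) - g₁ = (((b:ℕ) : ZMod (2*n)) - g₂) + (n:ℕ) then 1 else 0) := by
  rw [mul_ite, mul_one, mul_zero]
  exact key _ _

lemma split' (g₁ g₂ : ZMod (2*n)) (a b : Fin n) :
    (if sh n g₁ a = sh n g₂ b then (1:ℤ) else 0) =
    (if ((a:ℕ) : ZMod (2*n)) - g₁ = ((b:ℕ) : ZMod (2*n)) - g₂ then 1 else 0)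
      + (if ((a:ℕ) : ZMod (2*n)) - g₁ = (((b:ℕ) : ZMod (2*n)) - g₂) + (n:ℕ) then 1 else 0) := by
  exact split01 _ _

end Shift

section Dual

variable (n k lam : ℕ) (C : Matrix (Fin n) (Fin n) ℤ)

lemma dualC (hn : 0 < n) (hk : 0 < k) (hlam : 0 < lam)
    (hC01 : ∀ i j, C i j = -1 ∨ C i j = 0 ∨ C i j = 1)
    (hCW : C * Cᵀ = (k : ℤ) • 1)
    (hCB : (C.map fun t => |t|) * (C.map fun t => |t|)ᵀ =
      ((k : ℤ) - (lam : ℤ)) • 1 + (lam : ℤ) • allOnes (Fin n)) :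
    (∀ a, ∑ x, |C a x| = (k:ℤ)) ∧
    (∀ b, ∑ a, |C a b| = (k:ℤ)) ∧
    (∀ p q : Fin n, ∑ x, |C p x| * |C q x| =
      ((k:ℤ) - lam) * (if p = q then 1 else 0) + lam) ∧
    (∀ p q : Fin n, ∑ a, |C a p| * |C a q| =
      ((k:ℤ) - lam) * (if p = q then 1 else 0) + lam) ∧
    ((k:ℤ) * k = (k:ℤ) - lam + lam * n) := by
  have hA01 : ∀ a b, |C a b| = 0 ∨ |C a b| = 1 := by
    intro a b; rcases hC01 a b with h | h | h <;> rw [h] <;> norm_num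
  have hAsq : ∀ a b, |C a b| * |C a b| = |C a b| := by
    intro a b; rcases hA01 a b with h | h <;> rw [h] <;> ring
  -- entrywise version of hCB
  have hAAT : ∀ p q : Fin n, ∑ x, |C p x| * |C q x| =
      ((k:ℤ) - lam) * (if p = q then 1 else 0) + lam := by
    intro p q
    have h := congrFun (congrFun hCB p) q
    have hL : ((C.map fun t => |t|) * (C.map fun t => |t|)ᵀ) p q = ∑ x, |C p x| * |C q x| := by
      simp [Matrix.mul_apply, Matrix.map_apply, Matrix.transpose_apply]
    have hR : (((k:ℤ) - lam) • (1 : Matrix (Fin n) (Fin n) ℤ) + (lam:ℤ) • allOnes (Fin n)) p q =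
        ((k:ℤ) - lam) * (if p = q then 1 else 0) + lam := by
      rcases eq_or_ne p q with hpq | hpq <;>
      · simp only [Matrix.add_apply, Matrix.smul_apply, Matrix.one_apply, allOnes,
          Matrix.of_apply, smul_eq_mul, hpq]
        norm_num [hpq]
    rw [hL, hR] at h
    exact h
  have hrow : ∀ a, ∑ x, |C a x| = (k:ℤ) := by
    intro a
    have := hAAT a a
    rw [if_pos rfl] at this
    calc ∑ x, |C a x| = ∑ x, |C a x| * |C a x| := by
          exact (Finset.sum_congr rfl fun x _ => (hAsq a x)).symm
      _ = (k:ℤ) := by rw [this]; ring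
  by_cases hkl : k = lam
  · -- degenerate case : |C| is all ones and k = n
    subst hkl
    have hAAT' : ∀ p q : Fin n, ∑ x, |C p x| * |C q x| = (k:ℤ) := by
      intro p q; rw [hAAT p q]; ring
    have hsame : ∀ a a' x, |C a x| = |C a' x| := by
      have main : ∀ a a' x, |C a x| * |C a' x| = |C a x| := by
        intro a a' x
        have hle : ∀ y ∈ Finset.univ, |C a y| * |C a' y| ≤ |C a y| * |C a y| := by
          intro y _
          rcases hA01 a y with h | h <;> rcases hA01 a' y with h' | h' <;>
            rw [h, h'] <;> norm_num
        have heq : ∑ y, |C a y| * |C a' y| = ∑ y, |C a y| * |C a y| := by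
          rw [hAAT' a a']
          rw [Finset.sum_congr rfl fun y _ => hAsq a y, hrow a]
        have := (Finset.sum_eq_sum_iff_of_le hle).1 heq x (Finset.mem_univ x)
        rw [this, hAsq]
      intro a a' x
      have h1 := main a a' x
      have h2 := main a' a x
      rw [mul_comm] at h2
      rw [← h1, h2]
    have hAone : ∀ a b, |C a b| = 1 := by
      by_contra hcon
      push_neg at hcon
      obtain ⟨a₀, b₀, hab⟩ := hcon
      have h0 : |C a₀ b₀| = 0 := (hA01 a₀ b₀).resolve_right hab
      have hcol0 : ∀ a, C a b₀ = 0 := by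
        intro a
        have := hsame a a₀ b₀
        rw [h0] at this
        exact abs_eq_zero.mp this
      have hdet : C.det = 0 := Matrix.det_eq_zero_of_column_eq_zero b₀ hcol0
      have : ((k:ℤ) • (1 : Matrix (Fin n) (Fin n) ℤ)).det = (k:ℤ) ^ n := by
        rw [Matrix.det_smul, Matrix.det_one, mul_one, Fintype.card_fin]
      rw [← hCW, Matrix.det_mul, hdet, Matrix.det_transpose, hdet, mul_zero] at this
      exact (pow_ne_zero n (by exact_mod_cast hk.ne' : (k:ℤ) ≠ 0)) this.symm
    have hkn : (n:ℤ) = (k:ℤ) := by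
      have := hrow ⟨0, hn⟩
      rw [Finset.sum_congr rfl fun x _ => hAone ⟨0, hn⟩ x] at this
      simpa using this
    refine ⟨hrow, ?_, hAAT, ?_, ?_⟩
    · intro b
      rw [Finset.sum_congr rfl fun a _ => hAone a b]
      simpa using hkn
    · intro p q
      rw [Finset.sum_congr rfl fun a _ => by rw [hAone a p, hAone a q, one_mul]]
      simp only [Finset.sum_const, Finset.card_univ, Fintype.card_fin, nsmul_eq_mul, mul_one]
      rw [hkn]; ring
    · rw [← hkn]; ring
  · -- nondegenerate case, work over ℚ
    set B : Matrix (Fin n) (Fin n) ℚ := Matrix.of (fun a b => ((|C a b| : ℤ) : ℚ)) with hB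
    set Jq : Matrix (Fin n) (Fin n) ℚ := Matrix.of (fun _ _ => (1:ℚ)) with hJ
    set α : ℚ := (k:ℚ) - lam with hα_def
    have hα : α ≠ 0 := by
      rw [hα_def, sub_ne_zero]
      exact_mod_cast hkl
    have hkq : (k:ℚ) ≠ 0 := by exact_mod_cast hk.ne'
    have hnq : (n:ℚ) ≠ 0 := by exact_mod_cast hn.ne'
    have hs : α + (lam:ℚ) * n ≠ 0 := by
      have h1 : (1:ℚ) ≤ (lam:ℚ) := by exact_mod_cast hlam
      have h2 : (1:ℚ) ≤ (n:ℚ) := by exact_mod_cast hn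
      have h3 : (1:ℚ) ≤ (k:ℚ) := by exact_mod_cast hk
      have : (lam:ℚ) * n ≥ lam := by nlinarith
      rw [hα_def]
      nlinarith
    have hJJ : Jq * Jq = (n:ℚ) • Jq := by
      ext a b
      simp [hJ, Matrix.mul_apply, Finset.card_univ]
    have hBBT : B * Bᵀ = α • 1 + (lam:ℚ) • Jq := by
      ext p q
      have h := hAAT p q
      simp only [Matrix.mul_apply, Matrix.add_apply, Matrix.smul_apply, Matrix.one_apply,
        Matrix.transpose_apply, hB, hJ, Matrix.of_apply, smul_eq_mul, mul_one, hα_def]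
      by_cases hpq : p = q
      · rw [if_pos hpq] at h ⊢
        exact_mod_cast h
      · rw [if_neg hpq] at h ⊢
        exact_mod_cast h
    have hBJ : B * Jq = (k:ℚ) • Jq := by
      ext a b
      have := hrow a
      simp only [Matrix.mul_apply, Matrix.smul_apply, hB, hJ, Matrix.of_apply, mul_one,
        smul_eq_mul]
      exact_mod_cast this
    -- explicit right inverse of B * Bᵀ
    set e : ℚ := -((lam:ℚ) / (α * (α + lam * n))) with he_def
    set X : Matrix (Fin n) (Fin n) ℚ := α⁻¹ • 1 + e • Jq with hX_def
    have hSJ : (α • 1 + (lam:ℚ) • Jq) * Jq = (α + (lam:ℚ)*n) • Jq := by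
      rw [Matrix.add_mul, Matrix.smul_mul, Matrix.smul_mul, Matrix.one_mul, hJJ, smul_smul,
        ← add_smul]
    have hSX : (α • 1 + (lam:ℚ) • Jq) * X = 1 := by
      rw [hX_def, Matrix.mul_add, Matrix.mul_smul, Matrix.mul_smul, Matrix.mul_one, hSJ,
        smul_add, smul_smul, smul_smul, smul_smul]
      have hc1 : α⁻¹ * α = 1 := inv_mul_cancel₀ hα
      have hc2 : α⁻¹ * (lam:ℚ) + e * (α + lam * n) = 0 := by
        rw [he_def]
        field_simp
        ring
      rw [hc1, one_smul, add_assoc, ← add_smul, hc2, zero_smul, add_zero]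
    have hBY : B * (Bᵀ * X) = 1 := by
      rw [← Matrix.mul_assoc, hBBT, hSX]
    have hYB : (Bᵀ * X) * B = 1 := mul_eq_one_comm.mp hBY
    have cancel : ∀ M M' : Matrix (Fin n) (Fin n) ℚ, B * M = B * M' → M = M' := by
      intro M M' h
      calc M = 1 * M := (Matrix.one_mul M).symm
        _ = (Bᵀ * X * B) * M := by rw [hYB]
        _ = (Bᵀ * X) * (B * M) := by rw [Matrix.mul_assoc]
        _ = (Bᵀ * X) * (B * M') := by rw [h]
        _ = (Bᵀ * X * B) * M' := by rw [← Matrix.mul_assoc]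
        _ = 1 * M' := by rw [hYB]
        _ = M' := Matrix.one_mul M'
    -- column sums are constant
    set c₀ : ℚ := (α + lam * n) / k with hc₀_def
    have hBTJ : Bᵀ * Jq = c₀ • Jq := by
      apply cancel
      rw [← Matrix.mul_assoc, hBBT, hSJ, Matrix.mul_smul, hBJ, smul_smul, hc₀_def]
      congr 1
      field_simp
    -- sum of all entries two ways gives c₀ = k
    have hsumall : (n:ℚ) * c₀ = n * k := by
      have h1 : ∑ b : Fin n, ∑ a : Fin n, B a b = ∑ b : Fin n, c₀ := by
        apply Finset.sum_congr rfl
        intro b _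
        have := congrFun (congrFun hBTJ b) b
        simpa [Matrix.mul_apply, Matrix.smul_apply, Matrix.transpose_apply, hJ, smul_eq_mul]
          using this
      have h2 : ∑ a : Fin n, ∑ b : Fin n, B a b = ∑ a : Fin n, (k:ℚ) := by
        apply Finset.sum_congr rfl
        intro a _
        have := congrFun (congrFun hBJ a) a
        simpa [Matrix.mul_apply, Matrix.smul_apply, hJ, smul_eq_mul] using this
      rw [Finset.sum_comm] at h1
      rw [h1] at h2
      simp only [Finset.sum_const, Finset.card_univ, Fintype.card_fin, nsmul_eq_mul] at h2
      exact h2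
    have hc₀k : c₀ = (k:ℚ) := mul_left_cancel₀ hnq hsumall
    have hL5q : α + (lam:ℚ) * n = k * k := by
      have h := hc₀k
      rw [hc₀_def] at h
      field_simp at h
      linarith
    have hBTJ' : Bᵀ * Jq = (k:ℚ) • Jq := by rw [hBTJ, hc₀k]
    have hJB : Jq * B = (k:ℚ) • Jq := by
      have := congrArg Matrix.transpose hBTJ'
      rw [Matrix.transpose_mul, Matrix.transpose_smul, Matrix.transpose_transpose] at this
      have hJT : Jqᵀ = Jq := by ext a b; simp [hJ, Matrix.transpose_apply]
      rw [hJT] at this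
      exact this
    have hATAq : Bᵀ * B = α • 1 + (lam:ℚ) • Jq := by
      apply cancel
      rw [← Matrix.mul_assoc, hBBT]
      rw [Matrix.add_mul, Matrix.smul_mul, Matrix.smul_mul, Matrix.one_mul, hJB,
        Matrix.mul_add, Matrix.mul_smul, Matrix.mul_smul, Matrix.mul_one, hBJ]
    refine ⟨hrow, ?_, hAAT, ?_, ?_⟩
    · intro b
      have := congrFun (congrFun hJB b) b
      simp only [Matrix.mul_apply, Matrix.smul_apply, hJ, hB, Matrix.of_apply, one_mul,
        smul_eq_mul, mul_one] at this
      exact_mod_cast this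
    · intro p q
      have := congrFun (congrFun hATAq p) q
      simp only [Matrix.mul_apply, Matrix.add_apply, Matrix.smul_apply, Matrix.one_apply,
        Matrix.transpose_apply, hJ, hB, Matrix.of_apply, smul_eq_mul, mul_one, hα_def] at this
      by_cases hpq : p = q
      · rw [if_pos hpq] at this ⊢
        exact_mod_cast this
      · rw [if_neg hpq] at this ⊢
        exact_mod_cast this
    · have h := hL5q
      rw [hα_def] at h
      qify
      linarith

end Dual

lemma transpose_count (m n : ℕ) (hm : 0 < m) (hn : 0 < n) (hdvd : 2 * n ∣ m)
    (c : Fin m → Fin m → ZMod (2 * n))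
    (hc : ∀ i j : Fin m, i ≠ j → ∀ g : ZMod (2 * n),
      (Finset.univ.filter fun ℓ => c i ℓ - c j ℓ = g).card = m / (2 * n)) :
    ∀ i j : Fin m, i ≠ j → ∀ g : ZMod (2 * n),
      (Finset.univ.filter fun ℓ => c ℓ i - c ℓ j = g).card = m / (2 * n) := by
  haveI : NeZero (2*n) := ⟨by omega⟩
  have hN : 0 < 2*n := by omega
  obtain ⟨q, hq⟩ := hdvd
  have hmN : m / (2*n) = q := by rw [hq]; exact Nat.mul_div_cancel_left q hN
  set ζ : ℂ := Complex.exp (2 * Real.pi * Complex.I / ((2*n : ℕ) : ℂ)) with hζdef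
  have hζ : IsPrimitiveRoot ζ (2*n) := Complex.isPrimitiveRoot_exp _ hN.ne'
  have hζN : ζ ^ (2*n) = 1 := hζ.pow_eq_one
  have hpowmod : ∀ x : ℕ, ζ ^ (x % (2*n)) = ζ ^ x := by
    intro x
    conv_rhs => rw [← Nat.div_add_mod x (2*n)]
    rw [pow_add, pow_mul, hζN, one_pow, one_mul]
  set e : ZMod (2*n) → ℂ := fun g => ζ ^ g.val with he
  have e_add : ∀ g h : ZMod (2*n), e (g + h) = e g * e h := by
    intro g h
    simp only [he]
    rw [ZMod.val_add, hpowmod, pow_add]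
  have e_zero : e 0 = 1 := by simp only [he]; rw [ZMod.val_zero, pow_zero]
  have orth : ∀ t : ZMod (2*n), t ≠ 0 → ∑ g : ZMod (2*n), e (t * g) = 0 := by
    intro t ht
    have h1 : ∀ g : ZMod (2*n), e (t * g) = (ζ ^ t.val) ^ g.val := by
      intro g
      simp only [he]
      rw [ZMod.val_mul, hpowmod, pow_mul]
    rw [Finset.sum_congr rfl fun g _ => h1 g]
    have htv : t.val ≠ 0 := by
      intro h0
      exact ht (ZMod.val_injective _ (by rw [h0, ZMod.val_zero]))
    have hω1 : ζ ^ t.val ≠ 1 :=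
      hζ.pow_ne_one_of_pos_of_lt htv (ZMod.val_lt t)
    have hbij : Function.Bijective (fun i : Fin (2*n) => ((i : ℕ) : ZMod (2*n))) := by
      rw [Fintype.bijective_iff_injective_and_card]
      constructor
      · intro a b hab
        simp only at hab
        apply Fin.ext
        rw [← ZMod.val_cast_of_lt a.isLt, ← ZMod.val_cast_of_lt b.isLt, hab]
      · rw [ZMod.card, Fintype.card_fin]
    have hre : ∑ g : ZMod (2*n), (ζ ^ t.val) ^ g.val
        = ∑ i : Fin (2*n), (ζ ^ t.val) ^ (((i : ℕ) : ZMod (2*n)).val) :=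
      (hbij.sum_comp fun g => (ζ ^ t.val) ^ g.val).symm
    rw [hre]
    have : ∀ i : Fin (2*n), (ζ ^ t.val) ^ (((i : ℕ) : ZMod (2*n)).val) = (ζ ^ t.val) ^ (i:ℕ) := by
      intro i
      rw [ZMod.val_cast_of_lt i.isLt]
    rw [Finset.sum_congr rfl fun i _ => this i, Fin.sum_univ_eq_sum_range,
      geom_sum_eq hω1]
    rw [← pow_mul, mul_comm, pow_mul, hζN, one_pow, sub_self, zero_div]
  have group : ∀ (d : Fin m → ZMod (2*n)) (F : ZMod (2*n) → ℂ),
      ∑ ℓ, F (d ℓ) = ∑ g : ZMod (2*n),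
        ((Finset.univ.filter fun ℓ => d ℓ = g).card : ℂ) * F g := by
    intro d F
    rw [← Finset.sum_fiberwise Finset.univ d (fun ℓ => F (d ℓ))]
    refine Finset.sum_congr rfl fun g _ => ?_
    rw [Finset.sum_congr rfl (fun ℓ hℓ => by rw [(Finset.mem_filter.mp hℓ).2]),
      Finset.sum_const, nsmul_eq_mul]
  have rowsum : ∀ t : ZMod (2*n), t ≠ 0 → ∀ i' j' : Fin m, i' ≠ j' →
      ∑ ℓ, e (t * c i' ℓ) * e (-(t * c j' ℓ)) = 0 := by
    intro t ht i' j' hij'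
    have h1 : ∀ ℓ, e (t * c i' ℓ) * e (-(t * c j' ℓ)) = e (t * (c i' ℓ - c j' ℓ)) := by
      intro ℓ
      rw [← e_add]
      congr 1
      ring
    rw [Finset.sum_congr rfl fun ℓ _ => h1 ℓ,
      group (fun ℓ => c i' ℓ - c j' ℓ) (fun g => e (t * g))]
    have h2 : ∀ g : ZMod (2*n),
        ((Finset.univ.filter fun ℓ => c i' ℓ - c j' ℓ = g).card : ℂ) = (q:ℂ) := by
      intro g
      rw [hc i' j' hij' g, hmN]
    rw [Finset.sum_congr rfl fun g _ => by rw [h2 g], ← Finset.mul_sum, orth t ht, mul_zero]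
  have hm0 : (m:ℂ) ≠ 0 := by exact_mod_cast hm.ne'
  have colsum : ∀ t : ZMod (2*n), t ≠ 0 → ∀ i' j' : Fin m, i' ≠ j' →
      ∑ x, e (-(t * c x i')) * e (t * c x j') = 0 := by
    intro t ht i' j' hij'
    set P : Matrix (Fin m) (Fin m) ℂ := Matrix.of (fun x ℓ => e (t * c x ℓ)) with hP
    set Q : Matrix (Fin m) (Fin m) ℂ := Matrix.of (fun ℓ x => e (-(t * c x ℓ))) with hQ
    have hPQ : P * Q = (m:ℂ) • 1 := by
      ext x y
      simp only [Matrix.mul_apply, hP, hQ, Matrix.of_apply, Matrix.smul_apply,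
        Matrix.one_apply, smul_eq_mul]
      rcases eq_or_ne x y with rfl | hxy
      · rw [if_pos rfl, mul_one]
        have h1 : ∀ ℓ, e (t * c x ℓ) * e (-(t * c x ℓ)) = 1 := by
          intro ℓ
          rw [← e_add, add_neg_cancel, e_zero]
        rw [Finset.sum_congr rfl fun ℓ _ => h1 ℓ, Finset.sum_const, Finset.card_univ,
          Fintype.card_fin, nsmul_eq_mul, mul_one]
      · rw [if_neg hxy, mul_zero]
        exact rowsum t ht x y hxy
    have hQP : Q * P = (m:ℂ) • 1 := by
      have h1 : P * ((m:ℂ)⁻¹ • Q) = 1 := by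
        rw [Matrix.mul_smul, hPQ, smul_smul, inv_mul_cancel₀ hm0, one_smul]
      have h2 : ((m:ℂ)⁻¹ • Q) * P = 1 := mul_eq_one_comm.mp h1
      calc Q * P = (m:ℂ) • (((m:ℂ)⁻¹ • Q) * P) := by
            rw [Matrix.smul_mul, smul_smul, mul_inv_cancel₀ hm0, one_smul]
        _ = (m:ℂ) • 1 := by rw [h2]
    have := congrFun (congrFun hQP i') j'
    simp only [Matrix.mul_apply, hP, hQ, Matrix.of_apply, Matrix.smul_apply,
      Matrix.one_apply, smul_eq_mul, if_neg hij', mul_zero] at this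
    exact this
  intro i j hij g₀
  have expand : ∀ t : ZMod (2*n),
      (∑ ℓ, e (t * ((c ℓ i - c ℓ j) - g₀))) = if t = 0 then (m:ℂ) else 0 := by
    intro t
    rcases eq_or_ne t 0 with rfl | ht
    · rw [if_pos rfl]
      have h1 : ∀ ℓ : Fin m, e ((0 : ZMod (2*n)) * ((c ℓ i - c ℓ j) - g₀)) = 1 := by
        intro ℓ
        rw [zero_mul, e_zero]
      rw [Finset.sum_congr rfl fun ℓ _ => h1 ℓ, Finset.sum_const, Finset.card_univ,
        Fintype.card_fin, nsmul_eq_mul, mul_one]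
    · rw [if_neg ht]
      have h1 : ∀ ℓ, e (t * ((c ℓ i - c ℓ j) - g₀))
          = e (-(t * c ℓ j)) * e (t * c ℓ i) * e (-(t * g₀)) := by
        intro ℓ
        rw [← e_add, ← e_add]
        congr 1
        ring
      rw [Finset.sum_congr rfl fun ℓ _ => h1 ℓ, ← Finset.sum_mul,
        colsum t ht j i (Ne.symm hij), zero_mul]
  have lhs1 : ∑ t : ZMod (2*n), ∑ ℓ, e (t * ((c ℓ i - c ℓ j) - g₀)) = (m:ℂ) := by
    rw [Finset.sum_congr rfl fun t _ => expand t, Finset.sum_ite_eq' Finset.univ 0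
      (fun _ => (m:ℂ))]
    rw [if_pos (Finset.mem_univ 0)]
  have lhs2 : ∑ t : ZMod (2*n), ∑ ℓ, e (t * ((c ℓ i - c ℓ j) - g₀))
      = ((2*n : ℕ) : ℂ) * ((Finset.univ.filter fun ℓ => c ℓ i - c ℓ j = g₀).card : ℂ) := by
    rw [Finset.sum_comm]
    have inner : ∀ ℓ, (∑ t : ZMod (2*n), e (t * ((c ℓ i - c ℓ j) - g₀)))
        = if c ℓ i - c ℓ j = g₀ then ((2*n:ℕ):ℂ) else 0 := by
      intro ℓ
      rcases eq_or_ne (c ℓ i - c ℓ j) g₀ with hd | hd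
      · rw [if_pos hd]
        have h1 : ∀ t : ZMod (2*n), e (t * ((c ℓ i - c ℓ j) - g₀)) = 1 := by
          intro t
          rw [hd, sub_self, mul_zero, e_zero]
        rw [Finset.sum_congr rfl fun t _ => h1 t, Finset.sum_const, Finset.card_univ,
          ZMod.card, nsmul_eq_mul, mul_one]
      · rw [if_neg hd]
        have hd0 : (c ℓ i - c ℓ j) - g₀ ≠ 0 := sub_ne_zero.mpr hd
        have h1 : ∀ t : ZMod (2*n), e (t * ((c ℓ i - c ℓ j) - g₀))
            = e (((c ℓ i - c ℓ j) - g₀) * t) := by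
          intro t
          rw [mul_comm]
        rw [Finset.sum_congr rfl fun t _ => h1 t]
        exact orth _ hd0
    rw [Finset.sum_congr rfl fun ℓ _ => inner ℓ, ← Finset.sum_filter, Finset.sum_const,
      nsmul_eq_mul, mul_comm]
  have main : ((2*n : ℕ) : ℂ) * ((Finset.univ.filter fun ℓ => c ℓ i - c ℓ j = g₀).card : ℂ)
      = (m : ℂ) := by rw [← lhs2, lhs1]
  have hnat : (2*n) * (Finset.univ.filter fun ℓ => c ℓ i - c ℓ j = g₀).card = m := by
    exact_mod_cast main
  rw [hmN]
  exact Nat.eq_of_mul_eq_mul_left hN (by rw [hnat, hq])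

theorem stmt5 (m n k lam : ℕ) (hm : 0 < m) (hn : 0 < n) (hk : 0 < k) (hlam : 0 < lam)
    (hdvd : 2 * n ∣ m)
    -- a BGW(m, m, m) over the cyclic group ℤ/2nℤ
    (c : Fin m → Fin m → ZMod (2 * n))
    (hc : ∀ i j : Fin m, i ≠ j → ∀ g : ZMod (2 * n),
      (Finset.univ.filter fun ℓ => c i ℓ - c j ℓ = g).card = m / (2 * n))
    -- a BGW(n, k, λ) over {1, -1}
    (C : Matrix (Fin n) (Fin n) ℤ)
    (hC01 : ∀ i j, C i j = -1 ∨ C i j = 0 ∨ C i j = 1)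
    (hCW : C * Cᵀ = (k : ℤ) • 1)
    (hCB : (C.map fun t => |t|) * (C.map fun t => |t|)ᵀ =
      ((k : ℤ) - (lam : ℤ)) • 1 + (lam : ℤ) • allOnes (Fin n)) :
    ∃ W : Matrix (Fin m × Fin n) (Fin m × Fin n) ℤ,
      (∀ x y, W x y = -1 ∨ W x y = 0 ∨ W x y = 1) ∧
      W * Wᵀ = ((m : ℤ) * k) • 1 ∧
      (W.map fun t => |t|) * (W.map fun t => |t|)ᵀ =
        ((m : ℤ) * k) • 1 + ((m : ℤ) * lam) • (blockJ m n - 1) +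
          (((m / n : ℕ) : ℤ) * (k : ℤ) ^ 2) • (allOnes (Fin m × Fin n) - blockJ m n) ∧
      (W.map fun t => |t|)ᵀ * (W.map fun t => |t|) =
        ((m : ℤ) * k) • 1 + ((m : ℤ) * lam) • (blockJ m n - 1) +
          (((m / n : ℕ) : ℤ) * (k : ℤ) ^ 2) • (allOnes (Fin m × Fin n) - blockJ m n) ∧
      (W.map fun t => |t|) * blockJ m n = (k : ℤ) • allOnes (Fin m × Fin n) ∧
      blockJ m n * (W.map fun t => |t|) = (k : ℤ) • allOnes (Fin m × Fin n) := by
  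
  haveI : NeZero n := ⟨hn.ne'⟩
  obtain ⟨qq, hq⟩ := hdvd
  have hN : 0 < 2*n := by omega
  have hmN : m / (2*n) = qq := by rw [hq]; exact Nat.mul_div_cancel_left qq hN
  have hmn : m / n = 2*qq := by
    rw [hq, show 2*n*qq = n*(2*qq) by ring]
    exact Nat.mul_div_cancel_left _ hn
  have hqZ : (m:ℤ) = 2*n*qq := by exact_mod_cast hq
  obtain ⟨hrowA, hcolA, hAAT, hATA, hL5⟩ := dualC n k lam C hn hk hlam hC01 hCW hCB
  have hcT := transpose_count m n hm hn ⟨qq, hq⟩ c hc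
  have hCWe : ∀ p q : Fin n, ∑ x, C p x * C q x = (k:ℤ) * (if p = q then 1 else 0) := by
    intro p q
    have h := congrFun (congrFun hCW p) q
    have hL : (C * Cᵀ) p q = ∑ x, C p x * C q x := by
      simp [Matrix.mul_apply, Matrix.transpose_apply]
    have hR : ((k:ℤ) • (1 : Matrix (Fin n) (Fin n) ℤ)) p q
        = (k:ℤ) * (if p = q then 1 else 0) := by
      rcases eq_or_ne p q with rfl | hpq
      · simp [Matrix.one_apply]
      · simp [Matrix.one_apply_ne hpq, hpq]
    rw [hL, hR] at h
    exact h
  have cnt : ∀ i j : Fin m, i ≠ j → ∀ D : ZMod (2*n),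
      (∑ ℓ : Fin m, if c i ℓ - c j ℓ = D then (1:ℤ) else 0) = (qq:ℤ) := by
    intro i j hij D
    rw [Finset.sum_boole, hc i j hij D, hmN]
  have cntT : ∀ i j : Fin m, i ≠ j → ∀ D : ZMod (2*n),
      (∑ ℓ : Fin m, if c ℓ i - c ℓ j = D then (1:ℤ) else 0) = (qq:ℤ) := by
    intro i j hij D
    rw [Finset.sum_boole, hcT i j hij D, hmN]
  have groupZ : ∀ (d : Fin m → ZMod (2*n)) (F : ZMod (2*n) → ℤ),
      ∑ ℓ, F (d ℓ) = ∑ g : ZMod (2*n),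
        ((Finset.univ.filter fun ℓ => d ℓ = g).card : ℤ) * F g := by
    intro d F
    rw [← Finset.sum_fiberwise Finset.univ d (fun ℓ => F (d ℓ))]
    refine Finset.sum_congr rfl fun g _ => ?_
    rw [Finset.sum_congr rfl (fun ℓ hℓ => by rw [(Finset.mem_filter.mp hℓ).2]),
      Finset.sum_const, nsmul_eq_mul]
  have sum_diag : ∀ (i : Fin m) (a b : Fin n),
      (∑ ℓ : Fin m, if c i ℓ - c i ℓ = ((a:ℕ) : ZMod (2*n)) - ((b:ℕ) : ZMod (2*n))
        then (1:ℤ) else 0) = if a = b then (m:ℤ) else 0 := by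
    intro i a b
    have hcond : ∀ ℓ : Fin m,
        (c i ℓ - c i ℓ = ((a:ℕ) : ZMod (2*n)) - ((b:ℕ) : ZMod (2*n))) ↔ a = b := by
      intro ℓ
      rw [sub_self]
      constructor
      · intro h
        exact cast_fin_inj (by linear_combination -h)
      · rintro rfl
        rw [sub_self]
    rw [Finset.sum_congr rfl fun ℓ _ => if_congr (hcond ℓ) rfl rfl]
    by_cases hab : a = b <;> simp [hab, Finset.card_univ]
  have sum_diag2 : ∀ (i : Fin m) (a b : Fin n),
      (∑ ℓ : Fin m, if c i ℓ - c i ℓ = ((a:ℕ) : ZMod (2*n)) - ((b:ℕ) : ZMod (2*n)) - ((n:ℕ) : ZMod (2*n))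
        then (1:ℤ) else 0) = 0 := by
    intro i a b
    have hcond : ∀ ℓ : Fin m,
        ¬(c i ℓ - c i ℓ = ((a:ℕ) : ZMod (2*n)) - ((b:ℕ) : ZMod (2*n)) - ((n:ℕ) : ZMod (2*n))) := by
      intro ℓ h
      rw [sub_self] at h
      exact not_cast_eq_add_n a b (by linear_combination -h)
    rw [Finset.sum_congr rfl fun ℓ _ => if_neg (hcond ℓ)]
    simp
  set W : Matrix (Fin m × Fin n) (Fin m × Fin n) ℤ := Matrix.of
    (fun p q => sg n (((p.2:ℕ) : ZMod (2*n)) - c p.1 q.1) * C (sh n (c p.1 q.1) p.2) q.2)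
    with hWdef
  have sgcases : ∀ z : ZMod (2*n), sg n z = 1 ∨ sg n z = -1 := by
    intro z
    unfold sg
    split <;> tauto
  have hWabs : (W.map fun t => |t|) = Matrix.of
      (fun p q => |C (sh n (c p.1 q.1) p.2) q.2|) := by
    ext p q
    simp only [Matrix.map_apply, hWdef, Matrix.of_apply, abs_mul, sg_abs, one_mul]
  have hRHS2 : ∀ (i j : Fin m) (a b : Fin n),
      (((m:ℤ) * k) • (1 : Matrix (Fin m × Fin n) (Fin m × Fin n) ℤ) +
        ((m:ℤ) * lam) • (blockJ m n - 1) +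
        (((m / n : ℕ) : ℤ) * (k:ℤ) ^ 2) • (allOnes (Fin m × Fin n) - blockJ m n)) (i,a) (j,b)
      = if i = j then (if a = b then (m:ℤ) * k else (m:ℤ) * lam)
        else ((2*qq : ℕ) : ℤ) * (k:ℤ)^2 := by
    intro i j a b
    have hb : blockJ m n (i,a) (j,b) = if i = j then 1 else 0 := rfl
    have ha1 : allOnes (Fin m × Fin n) (i,a) (j,b) = 1 := rfl
    have h1 : (1 : Matrix (Fin m × Fin n) (Fin m × Fin n) ℤ) (i,a) (j,b)
        = if i = j ∧ a = b then 1 else 0 := by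
      by_cases h : i = j ∧ a = b
      · obtain ⟨rfl, rfl⟩ := h
        rw [Matrix.one_apply_eq, if_pos ⟨rfl, rfl⟩]
      · have hne : ((i,a) : Fin m × Fin n) ≠ (j,b) := by
          simp only [ne_eq, Prod.mk.injEq]
          tauto
        rw [Matrix.one_apply_ne hne, if_neg h]
    rw [Matrix.add_apply, Matrix.add_apply, Matrix.smul_apply, Matrix.smul_apply,
      Matrix.smul_apply, Matrix.sub_apply, Matrix.sub_apply, hb, ha1, h1, smul_eq_mul,
      smul_eq_mul, smul_eq_mul, hmn]
    by_cases hij : i = j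
    · by_cases hab : a = b
      · rw [if_pos (⟨hij, hab⟩ : i = j ∧ a = b), if_pos hij, if_pos hij, if_pos hab]
        push_cast
        ring
      · rw [if_neg (by tauto : ¬(i = j ∧ a = b)), if_pos hij, if_pos hij, if_neg hab]
        push_cast
        ring
    · rw [if_neg (by tauto : ¬(i = j ∧ a = b)), if_neg hij, if_neg hij]
      push_cast
      ring
  refine ⟨W, ?_, ?_, ?_, ?_, ?_, ?_⟩
  · -- entries
    intro x y
    simp only [hWdef, Matrix.of_apply]
    rcases sgcases (((x.2:ℕ) : ZMod (2*n)) - c x.1 y.1) with hs | hs <;>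
      rcases hC01 (sh n (c x.1 y.1) x.2) y.2 with hcc | hcc | hcc <;>
      rw [hs, hcc] <;> norm_num
  · -- W * Wᵀ = mk • 1
    ext ⟨i, a⟩ ⟨j, b⟩
    rw [Matrix.mul_apply, Fintype.sum_prod_type]
    have hinner : ∀ ℓ : Fin m, (∑ x : Fin n, W (i,a) (ℓ,x) * Wᵀ (ℓ,x) (j,b))
        = (k:ℤ) * ((if c i ℓ - c j ℓ = ((a:ℕ) : ZMod (2*n)) - ((b:ℕ) : ZMod (2*n))
              then 1 else 0)
            - (if c i ℓ - c j ℓ = ((a:ℕ) : ZMod (2*n)) - ((b:ℕ) : ZMod (2*n)) - ((n:ℕ) : ZMod (2*n))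
              then 1 else 0)) := by
      intro ℓ
      have e1 : ∀ x : Fin n, W (i,a) (ℓ,x) * Wᵀ (ℓ,x) (j,b)
          = (sg n (((a:ℕ) : ZMod (2*n)) - c i ℓ) * sg n (((b:ℕ) : ZMod (2*n)) - c j ℓ)) *
            (C (sh n (c i ℓ) a) x * C (sh n (c j ℓ) b) x) := by
        intro x
        simp only [hWdef, Matrix.transpose_apply, Matrix.of_apply]
        ring
      rw [Finset.sum_congr rfl fun x _ => e1 x, ← Finset.mul_sum, hCWe]
      have hiff1 : (((a:ℕ) : ZMod (2*n)) - c i ℓ = ((b:ℕ) : ZMod (2*n)) - c j ℓ)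
          ↔ (c i ℓ - c j ℓ = ((a:ℕ) : ZMod (2*n)) - ((b:ℕ) : ZMod (2*n))) :=
        ⟨fun h => by linear_combination -h, fun h => by linear_combination -h⟩
      have hiff2 : (((a:ℕ) : ZMod (2*n)) - c i ℓ = (((b:ℕ) : ZMod (2*n)) - c j ℓ) + ((n:ℕ) : ZMod (2*n)))
          ↔ (c i ℓ - c j ℓ = ((a:ℕ) : ZMod (2*n)) - ((b:ℕ) : ZMod (2*n)) - ((n:ℕ) : ZMod (2*n))) :=
        ⟨fun h => by linear_combination -h, fun h => by linear_combination -h⟩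
      calc sg n (((a:ℕ) : ZMod (2*n)) - c i ℓ) * sg n (((b:ℕ) : ZMod (2*n)) - c j ℓ) *
            ((k:ℤ) * (if sh n (c i ℓ) a = sh n (c j ℓ) b then 1 else 0))
          = (k:ℤ) * (sg n (((a:ℕ) : ZMod (2*n)) - c i ℓ) * sg n (((b:ℕ) : ZMod (2*n)) - c j ℓ) *
            (if sh n (c i ℓ) a = sh n (c j ℓ) b then 1 else 0)) := by ring
        _ = _ := by
            rw [key' (c i ℓ) (c j ℓ) a b, if_congr hiff1 rfl rfl, if_congr hiff2 rfl rfl]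
    rw [Finset.sum_congr rfl fun ℓ _ => hinner ℓ, ← Finset.mul_sum, Finset.sum_sub_distrib]
    have hRHS : (((m:ℤ) * k) • (1 : Matrix (Fin m × Fin n) (Fin m × Fin n) ℤ)) (i,a) (j,b)
        = if i = j ∧ a = b then (m:ℤ) * k else 0 := by
      by_cases h : i = j ∧ a = b
      · obtain ⟨rfl, rfl⟩ := h
        simp [Matrix.smul_apply, Matrix.one_apply]
      · rw [if_neg h]
        have : ((i,a) : Fin m × Fin n) ≠ (j,b) := by
          simp only [ne_eq, Prod.mk.injEq]
          tauto
        simp [Matrix.smul_apply, Matrix.one_apply_ne this]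
    rw [hRHS]
    by_cases hij : i = j
    · subst hij
      rw [sum_diag i a b, sum_diag2 i a b, sub_zero]
      by_cases hab : a = b
      · rw [if_pos hab, if_pos ⟨rfl, hab⟩]
        ring
      · rw [if_neg hab, if_neg (by tauto), mul_zero]
    · rw [cnt i j hij _, cnt i j hij _, sub_self, mul_zero, if_neg (by tauto)]
  · -- |W| |W|ᵀ
    rw [hWabs]
    ext ⟨i, a⟩ ⟨j, b⟩
    rw [Matrix.mul_apply, Fintype.sum_prod_type, hRHS2 i j a b]
    have hinner : ∀ ℓ : Fin m,
        (∑ x : Fin n, (Matrix.of (fun p q => |C (sh n (c p.1 q.1) p.2) q.2|)) (i,a) (ℓ,x) *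
          (Matrix.of (fun p q => |C (sh n (c p.1 q.1) p.2) q.2|))ᵀ (ℓ,x) (j,b))
        = ((k:ℤ) - lam) *
            ((if c i ℓ - c j ℓ = ((a:ℕ) : ZMod (2*n)) - ((b:ℕ) : ZMod (2*n)) then 1 else 0)
              + (if c i ℓ - c j ℓ = ((a:ℕ) : ZMod (2*n)) - ((b:ℕ) : ZMod (2*n)) - ((n:ℕ) : ZMod (2*n))
                then 1 else 0)) + (lam:ℤ) := by
      intro ℓ
      have e1 : ∀ x : Fin n,
          (Matrix.of (fun p q => |C (sh n (c p.1 q.1) p.2) q.2|)) (i,a) (ℓ,x) *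
            (Matrix.of (fun p q => |C (sh n (c p.1 q.1) p.2) q.2|))ᵀ (ℓ,x) (j,b)
          = |C (sh n (c i ℓ) a) x| * |C (sh n (c j ℓ) b) x| := by
        intro x
        simp only [Matrix.transpose_apply, Matrix.of_apply]
      rw [Finset.sum_congr rfl fun x _ => e1 x, hAAT]
      have hiff1 : (((a:ℕ) : ZMod (2*n)) - c i ℓ = ((b:ℕ) : ZMod (2*n)) - c j ℓ)
          ↔ (c i ℓ - c j ℓ = ((a:ℕ) : ZMod (2*n)) - ((b:ℕ) : ZMod (2*n))) :=
        ⟨fun h => by linear_combination -h, fun h => by linear_combination -h⟩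
      have hiff2 : (((a:ℕ) : ZMod (2*n)) - c i ℓ = (((b:ℕ) : ZMod (2*n)) - c j ℓ) + ((n:ℕ) : ZMod (2*n)))
          ↔ (c i ℓ - c j ℓ = ((a:ℕ) : ZMod (2*n)) - ((b:ℕ) : ZMod (2*n)) - ((n:ℕ) : ZMod (2*n))) :=
        ⟨fun h => by linear_combination -h, fun h => by linear_combination -h⟩
      rw [split' (c i ℓ) (c j ℓ) a b, if_congr hiff1 rfl rfl, if_congr hiff2 rfl rfl]
    rw [Finset.sum_congr rfl fun ℓ _ => hinner ℓ, Finset.sum_add_distrib, Finset.sum_const,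
      ← Finset.mul_sum, Finset.sum_add_distrib]
    by_cases hij : i = j
    · subst hij
      rw [sum_diag i a b, sum_diag2 i a b, add_zero, if_pos rfl]
      by_cases hab : a = b
      · rw [if_pos hab, if_pos hab]
        simp only [Finset.card_univ, Fintype.card_fin, nsmul_eq_mul]
        ring
      · rw [if_neg hab, if_neg hab]
        simp only [Finset.card_univ, Fintype.card_fin, nsmul_eq_mul]
        ring
    · rw [cnt i j hij _, cnt i j hij _, if_neg hij]
      simp only [Finset.card_univ, Fintype.card_fin, nsmul_eq_mul]
      push_cast
      linear_combination (-(2*(qq:ℤ))) * hL5 + (lam:ℤ) * hqZ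
  · -- |W|ᵀ |W|
    rw [hWabs]
    ext ⟨i, a⟩ ⟨j, b⟩
    rw [Matrix.mul_apply, Fintype.sum_prod_type, hRHS2 i j a b]
    have hinner : ∀ ℓ : Fin m,
        (∑ x : Fin n, (Matrix.of (fun p q => |C (sh n (c p.1 q.1) p.2) q.2|))ᵀ (i,a) (ℓ,x) *
          (Matrix.of (fun p q => |C (sh n (c p.1 q.1) p.2) q.2|)) (ℓ,x) (j,b))
        = ∑ y : Fin n, |C y a| * |C (sh n (c ℓ j - c ℓ i) y) b| := by
      intro ℓ
      have e1 : ∀ x : Fin n,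
          (Matrix.of (fun p q => |C (sh n (c p.1 q.1) p.2) q.2|))ᵀ (i,a) (ℓ,x) *
            (Matrix.of (fun p q => |C (sh n (c p.1 q.1) p.2) q.2|)) (ℓ,x) (j,b)
          = |C (sh n (c ℓ i) x) a| * |C (sh n (c ℓ j - c ℓ i) (sh n (c ℓ i) x)) b| := by
        intro x
        simp only [Matrix.transpose_apply, Matrix.of_apply]
        rw [← sh_comp]
      rw [Finset.sum_congr rfl fun x _ => e1 x]
      exact (sh_bijective (c ℓ i)).sum_comp
        (fun y => |C y a| * |C (sh n (c ℓ j - c ℓ i) y) b|)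
    rw [Finset.sum_congr rfl fun ℓ _ => hinner ℓ]
    by_cases hij : i = j
    · subst hij
      have e2 : ∀ ℓ : Fin m, (∑ y : Fin n, |C y a| * |C (sh n (c ℓ i - c ℓ i) y) b|)
          = ((k:ℤ) - lam) * (if a = b then 1 else 0) + lam := by
        intro ℓ
        rw [← hATA a b]
        refine Finset.sum_congr rfl fun y _ => ?_
        rw [sub_self, sh_zero]
      rw [Finset.sum_congr rfl fun ℓ _ => e2 ℓ, Finset.sum_const, if_pos rfl]
      simp only [Finset.card_univ, Fintype.card_fin, nsmul_eq_mul]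
      by_cases hab : a = b
      · rw [if_pos hab, if_pos hab]
        ring
      · rw [if_neg hab, if_neg hab]
        ring
    · rw [groupZ (fun ℓ => c ℓ j - c ℓ i)
        (fun g => ∑ y : Fin n, |C y a| * |C (sh n g y) b|)]
      have hcards : ∀ g : ZMod (2*n),
          ((Finset.univ.filter fun ℓ => c ℓ j - c ℓ i = g).card : ℤ) = (qq:ℤ) := by
        intro g
        rw [hcT j i (Ne.symm hij) g, hmN]
      rw [Finset.sum_congr rfl fun g _ => by rw [hcards g], ← Finset.mul_sum]
      have hsplit : (∑ g : ZMod (2*n), ∑ y : Fin n, |C y a| * |C (sh n g y) b|)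
          = ∑ y : Fin n, |C y a| * (∑ g : ZMod (2*n), |C (sh n g y) b|) := by
        rw [Finset.sum_comm]
        exact Finset.sum_congr rfl fun y _ => by rw [Finset.mul_sum]
      rw [hsplit]
      have hfiber : ∀ y : Fin n, (∑ g : ZMod (2*n), |C (sh n g y) b|) = 2 * (k:ℤ) := by
        intro y
        have h1 : (∑ g : ZMod (2*n), |C (sh n g y) b|)
            = ∑ d : ZMod (2*n), |C (fz n d) b| := by
          exact (Equiv.subLeft (((y:ℕ) : ZMod (2*n)))).sum_comp (fun d => |C (fz n d) b|)
        rw [h1, two_to_one (fun x => |C x b|), hcolA b]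
      rw [Finset.sum_congr rfl fun y _ => by rw [hfiber y]]
      rw [← Finset.sum_mul, hcolA a, if_neg hij]
      push_cast
      ring
  · -- |W| * blockJ
    rw [hWabs]
    ext ⟨i, a⟩ ⟨j, b⟩
    rw [Matrix.mul_apply, Fintype.sum_prod_type]
    have hinner : ∀ ℓ : Fin m,
        (∑ x : Fin n, (Matrix.of (fun p q => |C (sh n (c p.1 q.1) p.2) q.2|)) (i,a) (ℓ,x) *
          blockJ m n (ℓ,x) (j,b))
        = if ℓ = j then (k:ℤ) else 0 := by
      intro ℓ
      by_cases hℓ : ℓ = j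
      · subst hℓ
        rw [if_pos rfl]
        have e1 : ∀ x : Fin n,
            (Matrix.of (fun p q => |C (sh n (c p.1 q.1) p.2) q.2|)) (i,a) (ℓ,x) *
              blockJ m n (ℓ,x) (ℓ,b) = |C (sh n (c i ℓ) a) x| := by
          intro x
          simp [blockJ, Matrix.of_apply]
        rw [Finset.sum_congr rfl fun x _ => e1 x]
        exact hrowA (sh n (c i ℓ) a)
      · rw [if_neg hℓ]
        refine Finset.sum_eq_zero fun x _ => ?_
        simp [blockJ, Matrix.of_apply, hℓ]
    rw [Finset.sum_congr rfl fun ℓ _ => hinner ℓ, Finset.sum_ite_eq' Finset.univ j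
      (fun _ => (k:ℤ)), if_pos (Finset.mem_univ j)]
    simp [allOnes]
  · -- blockJ * |W|
    rw [hWabs]
    ext ⟨i, a⟩ ⟨j, b⟩
    rw [Matrix.mul_apply, Fintype.sum_prod_type]
    have hinner : ∀ ℓ : Fin m,
        (∑ x : Fin n, blockJ m n (i,a) (ℓ,x) *
          (Matrix.of (fun p q => |C (sh n (c p.1 q.1) p.2) q.2|)) (ℓ,x) (j,b))
        = if i = ℓ then (k:ℤ) else 0 := by
      intro ℓ
      by_cases hℓ : i = ℓ
      · subst hℓ
        rw [if_pos rfl]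
        have e1 : ∀ x : Fin n, blockJ m n (i,a) (i,x) *
            (Matrix.of (fun p q => |C (sh n (c p.1 q.1) p.2) q.2|)) (i,x) (j,b)
            = |C (sh n (c i j) x) b| := by
          intro x
          simp [blockJ, Matrix.of_apply]
        rw [Finset.sum_congr rfl fun x _ => e1 x]
        rw [(sh_bijective (c i j)).sum_comp (fun y => |C y b|)]
        exact hcolA b
      · rw [if_neg hℓ]
        refine Finset.sum_eq_zero fun x _ => ?_
        simp [blockJ, Matrix.of_apply, hℓ]
    rw [Finset.sum_congr rfl fun ℓ _ => hinner ℓ, Finset.sum_ite_eq Finset.univ i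
      (fun _ => (k:ℤ)), if_pos (Finset.mem_univ i)]
    simp [allOnes]
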